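/- Let a<b be real numbers, let g:[a,b]→ℝ be a càdlàg function of bounded variation and let f:[a,b]→ℝ be continuous. Then the deterministic forward integral over the half-open interval ∫_{]a,b]} g(x) d⁻f(x) exists and equals g(b)f(b) − g(a)f(a) − ∫_{]a,b]} f(x) dg(x), where dg denotes the Lebesgue–Stieltjes measure associated with g. -/

import Mathlib

open MeasureTheory Set Filter Topology
open scoped ENNReal

private lemma bdd_integrableOn {h : ℝ → ℝ} {s : Set ℝ} {μ : Measure ℝ}
    (hm : AEStronglyMeasurable h (μ.restrict s)) (hs : MeasurableSet s) (hvol : μ s < ∞)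
    {C : ℝ} (hC : ∀ x ∈ s, |h x| ≤ C) : IntegrableOn h s μ := by
  refine Integrable.mono' ((integrableOn_const (C := C) hvol.ne)) hm ?_
  exact (ae_restrict_iff' hs).2 (Eventually.of_forall fun x hx => by
    simpa [Real.norm_eq_abs] using hC x hx)

private lemma avg_right {h : ℝ → ℝ} {c L : ℝ}
    (hint : ∀ ε : ℝ, 0 < ε → IntegrableOn h (Ioc c (c + ε)))
    (hlim : Tendsto h (𝓝[>] c) (𝓝 L)) :
    Tendsto (fun ε : ℝ => (1 / ε) * ∫ y in Ioc c (c + ε), h y) (𝓝[>] (0 : ℝ)) (𝓝 L) := by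
  rw [Metric.tendsto_nhds]
  intro δ hδ
  have h2 : ∀ᶠ y in 𝓝[>] c, dist (h y) L < δ / 2 :=
    hlim (Metric.ball_mem_nhds L (by linarith))
  obtain ⟨u, hu, hsub⟩ := mem_nhdsGT_iff_exists_Ioc_subset.1 h2
  filter_upwards [Ioo_mem_nhdsGT_of_mem ⟨le_refl (0 : ℝ), sub_pos.2 hu⟩] with ε hε
  have hε0 : (0 : ℝ) < ε := hε.1
  have hεne : ε ≠ 0 := ne_of_gt hε0
  have hvol : volume (Ioc c (c + ε)) < ∞ := by
    simp [Real.volume_Ioc]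
  have hconst : IntegrableOn (fun _ : ℝ => L) (Ioc c (c + ε)) :=
    integrableOn_const hvol.ne
  have htr : (volume (Ioc c (c + ε))).toReal = ε := by
    rw [Real.volume_Ioc]
    simp [le_of_lt hε0]
  have key : (1 / ε) * (∫ y in Ioc c (c + ε), h y) - L
      = (1 / ε) * ∫ y in Ioc c (c + ε), (h y - L) := by
    rw [integral_sub (hint ε hε0) hconst, setIntegral_const, measureReal_def, htr, smul_eq_mul]
    field_simp
  have hbd : ‖∫ y in Ioc c (c + ε), (h y - L)‖ ≤ (δ / 2) * ε := by
    have := norm_setIntegral_le_of_norm_le_const (f := fun y => h y - L) hvol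
      (C := δ / 2) (fun x hx => by
        have : x ∈ Ioc c u := ⟨hx.1, hx.2.trans (by linarith [hε.2])⟩
        have := hsub this
        rw [Real.norm_eq_abs, ← Real.dist_eq]
        exact this.le)
    rwa [measureReal_def, htr] at this
  rw [Real.dist_eq, key]
  have : |(1 / ε) * ∫ y in Ioc c (c + ε), (h y - L)| ≤ (1 / ε) * ((δ / 2) * ε) := by
    rw [abs_mul, abs_of_pos (by positivity : (0:ℝ) < 1 / ε)]
    exact mul_le_mul_of_nonneg_left (by simpa [Real.norm_eq_abs] using hbd) (by positivity)
  calc |(1 / ε) * ∫ y in Ioc c (c + ε), (h y - L)| ≤ (1 / ε) * ((δ / 2) * ε) := this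
    _ = δ / 2 := by field_simp
    _ < δ := by linarith

private lemma avg_left {h : ℝ → ℝ} {c L : ℝ}
    (hint : ∀ ε : ℝ, 0 < ε → IntegrableOn h (Ioc (c - ε) c))
    (hlim : Tendsto h (𝓝[<] c) (𝓝 L)) :
    Tendsto (fun ε : ℝ => (1 / ε) * ∫ y in Ioc (c - ε) c, h y) (𝓝[>] (0 : ℝ)) (𝓝 L) := by
  rw [Metric.tendsto_nhds]
  intro δ hδ
  have h2 : ∀ᶠ y in 𝓝[<] c, dist (h y) L < δ / 2 :=
    hlim (Metric.ball_mem_nhds L (by linarith))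
  obtain ⟨u, hu, hsub⟩ := mem_nhdsLT_iff_exists_Ico_subset.1 h2
  filter_upwards [Ioo_mem_nhdsGT_of_mem ⟨le_refl (0 : ℝ), sub_pos.2 hu⟩] with ε hε
  have hε0 : (0 : ℝ) < ε := hε.1
  have hεne : ε ≠ 0 := ne_of_gt hε0
  have hvol : volume (Ioc (c - ε) c) < ∞ := by simp [Real.volume_Ioc]
  have hvol' : volume (Ioo (c - ε) c) < ∞ := by simp [Real.volume_Ioo]
  have hconst : IntegrableOn (fun _ : ℝ => L) (Ioc (c - ε) c) :=
    integrableOn_const hvol.ne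
  have htr : (volume (Ioc (c - ε) c)).toReal = ε := by
    rw [Real.volume_Ioc]; simp [le_of_lt hε0]
  have htr' : (volume (Ioo (c - ε) c)).toReal = ε := by
    rw [Real.volume_Ioo]; simp [le_of_lt hε0]
  have key : (1 / ε) * (∫ y in Ioc (c - ε) c, h y) - L
      = (1 / ε) * ∫ y in Ioo (c - ε) c, (h y - L) := by
    rw [← integral_Ioc_eq_integral_Ioo,
      integral_sub (hint ε hε0) hconst, setIntegral_const, measureReal_def, htr, smul_eq_mul]
    field_simp
  have hbd : ‖∫ y in Ioo (c - ε) c, (h y - L)‖ ≤ (δ / 2) * ε := by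
    have := norm_setIntegral_le_of_norm_le_const (f := fun y => h y - L) hvol'
      (C := δ / 2) (fun x hx => by
        have : x ∈ Ico u c := ⟨by linarith [hx.1, hε.2], hx.2⟩
        have := hsub this
        rw [Real.norm_eq_abs, ← Real.dist_eq]
        exact this.le)
    rwa [measureReal_def, htr'] at this
  rw [Real.dist_eq, key]
  have : |(1 / ε) * ∫ y in Ioo (c - ε) c, (h y - L)| ≤ (1 / ε) * ((δ / 2) * ε) := by
    rw [abs_mul, abs_of_pos (by positivity : (0:ℝ) < 1 / ε)]
    exact mul_le_mul_of_nonneg_left (by simpa [Real.norm_eq_abs] using hbd) (by positivity)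
  calc |(1 / ε) * ∫ y in Ioo (c - ε) c, (h y - L)| ≤ (1 / ε) * ((δ / 2) * ε) := this
    _ = δ / 2 := by field_simp
    _ < δ := by linarith

private lemma setIntegral_shift (F : ℝ → ℝ) (c d ε : ℝ) :
    ∫ x in Ioc c d, F (x + ε) = ∫ y in Ioc (c + ε) (d + ε), F y := by
  rw [← integral_indicator measurableSet_Ioc, ← integral_indicator measurableSet_Ioc,
    ← integral_add_right_eq_self (μ := volume) ((Ioc (c + ε) (d + ε)).indicator F) ε]
  congr 1
  ext x
  by_cases hx : x ∈ Ioc c d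
  · rw [indicator_of_mem hx,
      indicator_of_mem (show x + ε ∈ Ioc (c + ε) (d + ε) from
        ⟨by linarith [hx.1], by linarith [hx.2]⟩)]
  · rw [indicator_of_notMem hx, indicator_of_notMem (fun hmem =>
      hx ⟨by linarith [hmem.1], by linarith [hmem.2]⟩)]

private lemma key (a b : ℝ) (hab : a < b) (G : StieltjesFunction ℝ)
    (fJ : ℝ → ℝ) (hfc : Continuous fJ) {M : ℝ} (hM : ∀ x, |fJ x| ≤ M)
    (hconst : ∀ x, b ≤ x → fJ x = fJ b) :
    Tendsto (fun ε : ℝ => ∫ x in Ioc a b, G x * ((fJ (x + ε) - fJ x) / ε)) (𝓝[>] (0 : ℝ))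
      (𝓝 (G b * fJ b - G a * fJ a - ∫ x in Ioc a b, fJ x ∂G.measure)) := by
  have hGm : Measurable G := G.mono.measurable
  have hfm : Measurable fJ := hfc.measurable
  have M0 : 0 ≤ M := le_trans (abs_nonneg _) (hM 0)
  set ν : Measure ℝ := G.measure.restrict (Ioc a b) with hν
  haveI : IsFiniteMeasure ν := ⟨by
    rw [Measure.restrict_apply_univ, G.measure_Ioc]; exact ENNReal.ofReal_lt_top⟩
  -- a bound for G on [c,d]
  have hGbd : ∀ c d : ℝ, ∀ x ∈ Ioc c d, |G x| ≤ max |G c| |G d| := by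
    intro c d x hx
    refine abs_le.2 ⟨?_, ?_⟩
    · calc -(max |G c| |G d|) ≤ -|G c| := neg_le_neg (le_max_left _ _)
        _ ≤ G c := neg_abs_le _
        _ ≤ G x := G.mono hx.1.le
    · calc G x ≤ G d := G.mono hx.2
        _ ≤ |G d| := le_abs_self _
        _ ≤ max |G c| |G d| := le_max_right _ _
  -- integrability of G * (bounded measurable) on bounded Ioc's
  have hIG : ∀ (φ : ℝ → ℝ), Measurable φ → (∀ x, |φ x| ≤ M) → ∀ c d : ℝ,
      IntegrableOn (fun y => G y * φ y) (Ioc c d) := by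
    intro φ hφm hφM c d
    refine bdd_integrableOn ((hGm.mul hφm).aestronglyMeasurable) measurableSet_Ioc
      (by simp [Real.volume_Ioc]) (C := max |G c| |G d| * M) ?_
    intro x hx
    rw [abs_mul]
    exact mul_le_mul (hGbd c d x hx) (hφM x) (abs_nonneg _)
      (le_trans (abs_nonneg _) (le_max_left _ _))
  have hIfJ : ∀ c d : ℝ, IntegrableOn fJ (Ioc c d) := by
    intro c d
    exact bdd_integrableOn hfc.aestronglyMeasurable.restrict measurableSet_Ioc
      (by simp [Real.volume_Ioc]) (fun x _ => hM x)
  -- the inner-average function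
  set hE : ℝ → ℝ → ℝ :=
    fun ε t => (1 / ε) * ∫ y in Ioc (a + ε) b, (Ico t (t + ε)).indicator fJ y with hEdef
  -- Step 1 : the identity for 0 < ε < b - a
  have Ieq : ∀ ε ∈ Ioo (0 : ℝ) (b - a),
      ∫ x in Ioc a b, G x * ((fJ (x + ε) - fJ x) / ε)
        = -(∫ t, hE ε t ∂ν)
          + fJ b * ((1 / ε) * ∫ y in Ioc (b - ε) b, G y)
          - (1 / ε) * ∫ y in Ioc a (a + ε), G y * fJ y := by
    intro ε hε
    have hε0 : (0 : ℝ) < ε := hε.1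
    have hεne : ε ≠ 0 := ne_of_gt hε0
    have haεb : a + ε ≤ b := by linarith [hε.2]
    -- integrability facts
    have hIGfε : IntegrableOn (fun x => G x * fJ (x + ε)) (Ioc a b) :=
      hIG (fun x => fJ (x + ε)) (hfm.comp (measurable_id.add_const ε)) (fun x => hM _) a b
    have hIGf : ∀ c d : ℝ, IntegrableOn (fun x => G x * fJ x) (Ioc c d) :=
      hIG fJ hfm hM
    have hIGsh : ∀ c d : ℝ, IntegrableOn (fun y => G (y - ε) * fJ y) (Ioc c d) := by
      intro c d
      refine bdd_integrableOn (((hGm.comp (measurable_id.sub_const ε)).mul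
        hfm).aestronglyMeasurable) measurableSet_Ioc (by simp [Real.volume_Ioc])
        (C := max |G (c - ε)| |G (d - ε)| * M) ?_
      intro x hx
      rw [abs_mul]
      refine mul_le_mul (hGbd (c - ε) (d - ε) (x - ε)
        ⟨by linarith [hx.1], by linarith [hx.2]⟩) (hM x) (abs_nonneg _)
        (le_trans (abs_nonneg _) (le_max_left _ _))
    -- step A : pull out 1/ε and subtract
    have stepA : ∫ x in Ioc a b, G x * ((fJ (x + ε) - fJ x) / ε)
        = (1 / ε) * ((∫ x in Ioc a b, G x * fJ (x + ε)) - ∫ x in Ioc a b, G x * fJ x) := by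
      rw [← integral_sub hIGfε (hIGf a b), ← integral_const_mul]
      exact integral_congr_ae (Eventually.of_forall fun x => by ring)
    -- step B : translation
    have stepB : ∫ x in Ioc a b, G x * fJ (x + ε)
        = ∫ y in Ioc (a + ε) (b + ε), G (y - ε) * fJ y := by
      rw [← setIntegral_shift (fun y => G (y - ε) * fJ y) a b ε]
      exact integral_congr_ae (Eventually.of_forall fun x => by
        simp [add_sub_cancel_right])
    -- step C : split the translated integral
    have hdisj : Disjoint (Ioc (a + ε) b) (Ioc b (b + ε)) := by
      apply Set.disjoint_left.2
      intro y hy1 hy2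
      exact absurd hy1.2 (not_le.2 hy2.1)
    have hsplit1 : ∫ y in Ioc (a + ε) (b + ε), G (y - ε) * fJ y
        = (∫ y in Ioc (a + ε) b, G (y - ε) * fJ y) + ∫ y in Ioc b (b + ε), G (y - ε) * fJ y := by
      rw [← setIntegral_union hdisj measurableSet_Ioc (hIGsh (a + ε) b) (hIGsh b (b + ε)),
        Ioc_union_Ioc_eq_Ioc haεb (by linarith)]
    -- step D : the boundary term at b
    have stepD : ∫ y in Ioc b (b + ε), G (y - ε) * fJ y
        = fJ b * ∫ y in Ioc (b - ε) b, G y := by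
      have h1 : ∫ y in Ioc b (b + ε), G (y - ε) * fJ y
          = ∫ y in Ioc b (b + ε), G (y - ε) * fJ b := by
        refine setIntegral_congr_fun measurableSet_Ioc fun y hy => ?_
        rw [hconst y hy.1.le]
      rw [h1]
      have h2 : ∫ y in Ioc b (b + ε), G (y - ε) * fJ b
          = (∫ y in Ioc b (b + ε), G (y - ε)) * fJ b := integral_mul_const _ _
      have h3 : ∫ y in Ioc b (b + ε), G (y - ε) = ∫ y in Ioc (b - ε) b, G y := by
        have := setIntegral_shift G b (b + ε) (-ε)
        simp only [← sub_eq_add_neg] at this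
        rw [this]
        norm_num
      rw [h2, h3, mul_comm]
    -- step E : split the original integral
    have hdisj2 : Disjoint (Ioc a (a + ε)) (Ioc (a + ε) b) := by
      apply Set.disjoint_left.2
      intro y hy1 hy2
      exact absurd hy1.2 (not_le.2 hy2.1)
    have hsplit2 : ∫ x in Ioc a b, G x * fJ x
        = (∫ x in Ioc a (a + ε), G x * fJ x) + ∫ x in Ioc (a + ε) b, G x * fJ x := by
      rw [← setIntegral_union hdisj2 measurableSet_Ioc (hIGf a (a + ε)) (hIGf (a + ε) b),
        Ioc_union_Ioc_eq_Ioc (by linarith) haεb]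
    -- step F : Fubini
    have stepF : ∫ y in Ioc (a + ε) b, (G y - G (y - ε)) * fJ y
        = ∫ t, (∫ y in Ioc (a + ε) b, (Ico t (t + ε)).indicator fJ y) ∂ν := by
      set μy : Measure ℝ := volume.restrict (Ioc (a + ε) b) with hμy
      haveI : IsFiniteMeasure μy := ⟨by
        rw [Measure.restrict_apply_univ, Real.volume_Ioc]; exact ENNReal.ofReal_lt_top⟩
      set S : Set (ℝ × ℝ) := {p | p.2 ≤ p.1 ∧ p.1 < p.2 + ε} with hSdef
      have hS : MeasurableSet S :=
        (measurableSet_le measurable_snd measurable_fst).inter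
          (measurableSet_lt measurable_fst (measurable_snd.add_const ε))
      set F : ℝ × ℝ → ℝ := S.indicator (fun p => fJ p.1) with hFdef
      have hFmeas : Measurable F := (hfm.comp measurable_fst).indicator hS
      have hFint : Integrable F (μy.prod ν) := by
        refine Integrable.mono' (integrable_const M) hFmeas.aestronglyMeasurable
          (Eventually.of_forall fun p => ?_)
        rw [Real.norm_eq_abs]
        by_cases hp : p ∈ S
        · simpa [hFdef, indicator_of_mem hp] using hM p.1
        · simpa [hFdef, indicator_of_notMem hp] using M0
      have swap : ∫ y, (∫ t, F (y, t) ∂ν) ∂μy = ∫ t, (∫ y, F (y, t) ∂μy) ∂ν :=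
        integral_integral_swap hFint
      have inner1 : ∀ y ∈ Ioc (a + ε) b, (∫ t, F (y, t) ∂ν) = (G y - G (y - ε)) * fJ y := by
        intro y hy
        have heq : ∀ t, F (y, t) = (Ioc (y - ε) y).indicator (fun _ => fJ y) t := by
          intro t
          by_cases ht : t ∈ Ioc (y - ε) y
          · rw [indicator_of_mem ht]
            exact indicator_of_mem (show (y, t) ∈ S from ⟨ht.2, by linarith [ht.1]⟩) _
          · rw [indicator_of_notMem ht]
            exact indicator_of_notMem
              (show (y, t) ∉ S from fun hm => ht ⟨by linarith [hm.2], hm.1⟩) _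
        rw [integral_congr_ae (Eventually.of_forall heq),
          integral_indicator_const _ measurableSet_Ioc]
        have hsub : Ioc (y - ε) y ⊆ Ioc a b := fun t ht =>
          ⟨lt_of_le_of_lt (by linarith [hy.1] : a ≤ y - ε) ht.1, ht.2.trans hy.2⟩
        rw [hν, measureReal_def, Measure.restrict_apply measurableSet_Ioc,
          inter_eq_self_of_subset_left hsub, G.measure_Ioc,
          ENNReal.toReal_ofReal (sub_nonneg.2 (G.mono (by linarith : y - ε ≤ y))),
          smul_eq_mul, mul_comm]
      have inner2 : ∀ t, (∫ y, F (y, t) ∂μy)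
          = ∫ y in Ioc (a + ε) b, (Ico t (t + ε)).indicator fJ y := by
        intro t
        refine integral_congr_ae (Eventually.of_forall fun y => ?_)
        show F (y, t) = (Ico t (t + ε)).indicator fJ y
        by_cases hy : y ∈ Ico t (t + ε)
        · rw [indicator_of_mem hy]
          exact indicator_of_mem (show (y, t) ∈ S from ⟨hy.1, hy.2⟩) _
        · rw [indicator_of_notMem hy]
          exact indicator_of_notMem (show (y, t) ∉ S from fun hm => hy ⟨hm.1, hm.2⟩) _
      calc ∫ y in Ioc (a + ε) b, (G y - G (y - ε)) * fJ y
          = ∫ y, (∫ t, F (y, t) ∂ν) ∂μy := by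
            refine (setIntegral_congr_fun measurableSet_Ioc fun y hy => ?_).symm
            exact inner1 y hy
        _ = ∫ t, (∫ y, F (y, t) ∂μy) ∂ν := swap
        _ = ∫ t, (∫ y in Ioc (a + ε) b, (Ico t (t + ε)).indicator fJ y) ∂ν := by
            exact integral_congr_ae (Eventually.of_forall fun t => inner2 t)
    -- integrability for the difference
    have hIdiff : IntegrableOn (fun y => (G y - G (y - ε)) * fJ y) (Ioc (a + ε) b) := by
      have : (fun y => (G y - G (y - ε)) * fJ y)
          = fun y => G y * fJ y - G (y - ε) * fJ y := by funext y; ring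
      rw [this]
      exact (hIGf (a + ε) b).sub (hIGsh (a + ε) b)
    -- put everything together
    rw [stepA, stepB, hsplit1, stepD, hsplit2]
    have hcomb : (∫ y in Ioc (a + ε) b, G (y - ε) * fJ y) - ∫ x in Ioc (a + ε) b, G x * fJ x
        = -∫ y in Ioc (a + ε) b, (G y - G (y - ε)) * fJ y := by
      rw [← integral_sub (hIGsh (a + ε) b) (hIGf (a + ε) b), ← integral_neg]
      exact integral_congr_ae (Eventually.of_forall fun y => by ring)
    have hfinal : ∫ t, hE ε t ∂ν
        = (1 / ε) * ∫ t, (∫ y in Ioc (a + ε) b, (Ico t (t + ε)).indicator fJ y) ∂ν :=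
      integral_const_mul (1 / ε) _
    rw [hfinal, ← stepF]
    linear_combination (1 / ε) * hcomb
  -- Step 2 : measurability of hE
  have hEmeas : ∀ ε : ℝ, 0 < ε → AEStronglyMeasurable (hE ε) ν := by
    intro ε hε
    have hS' : MeasurableSet {p : ℝ × ℝ | p.1 ≤ p.2 ∧ p.2 < p.1 + ε} :=
      (measurableSet_le measurable_fst measurable_snd).inter
        (measurableSet_lt measurable_snd (measurable_fst.add_const ε))
    have hmeas2 : Measurable (fun p : ℝ × ℝ => (Ico p.1 (p.1 + ε)).indicator fJ p.2) := by
      have heq : (fun p : ℝ × ℝ => (Ico p.1 (p.1 + ε)).indicator fJ p.2)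
          = {p : ℝ × ℝ | p.1 ≤ p.2 ∧ p.2 < p.1 + ε}.indicator (fun p => fJ p.2) := by
        funext p
        by_cases hp : p.2 ∈ Ico p.1 (p.1 + ε)
        · rw [indicator_of_mem hp, indicator_of_mem (show p ∈ {p : ℝ × ℝ | p.1 ≤ p.2 ∧ p.2 < p.1 + ε} from ⟨hp.1, hp.2⟩)]
        · rw [indicator_of_notMem hp,
            indicator_of_notMem (fun hm => hp ⟨hm.1, hm.2⟩)]
      rw [heq]
      exact (hfm.comp measurable_snd).indicator hS'
    have := (hmeas2.aestronglyMeasurable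
      (μ := ν.prod (volume.restrict (Ioc (a + ε) b)))).integral_prod_right'
    exact this.const_mul (1 / ε)
  -- Step 3 : uniform bound of hE
  have hEbd : ∀ ε : ℝ, 0 < ε → ∀ t, |hE ε t| ≤ M := by
    intro ε hε t
    have hrw : hE ε t = (1 / ε) * ∫ y in Ioc (a + ε) b ∩ Ico t (t + ε), fJ y := by
      show (1 / ε) * ∫ y in Ioc (a + ε) b, (Ico t (t + ε)).indicator fJ y
          = (1 / ε) * ∫ y in Ioc (a + ε) b ∩ Ico t (t + ε), fJ y
      rw [setIntegral_indicator measurableSet_Ico]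
    have hv : volume (Ioc (a + ε) b ∩ Ico t (t + ε)) ≤ ENNReal.ofReal ε := by
      calc volume (Ioc (a + ε) b ∩ Ico t (t + ε)) ≤ volume (Ico t (t + ε)) :=
            measure_mono inter_subset_right
        _ = ENNReal.ofReal ε := by rw [Real.volume_Ico]; norm_num
    have hvlt : volume (Ioc (a + ε) b ∩ Ico t (t + ε)) < ∞ :=
      lt_of_le_of_lt hv ENNReal.ofReal_lt_top
    have hbound := norm_setIntegral_le_of_norm_le_const (f := fJ) hvlt
      (C := M) (fun y _ => by simpa [Real.norm_eq_abs] using hM y)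
    have htr : (volume (Ioc (a + ε) b ∩ Ico t (t + ε))).toReal ≤ ε :=
      ENNReal.toReal_le_of_le_ofReal hε.le hv
    rw [hrw, abs_mul, abs_of_pos (by positivity : (0:ℝ) < 1 / ε)]
    calc (1 / ε) * |∫ y in Ioc (a + ε) b ∩ Ico t (t + ε), fJ y|
        ≤ (1 / ε) * (M * ε) := by
          refine mul_le_mul_of_nonneg_left ?_ (by positivity)
          calc |∫ y in Ioc (a + ε) b ∩ Ico t (t + ε), fJ y|
              ≤ M * (volume (Ioc (a + ε) b ∩ Ico t (t + ε))).toReal := by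
                simpa [Real.norm_eq_abs, measureReal_def] using hbound
            _ ≤ M * ε := mul_le_mul_of_nonneg_left htr M0
      _ = M := by field_simp
  -- Step 4 : pointwise limit of hE
  have hElim : ∀ t ∈ Ioc a b,
      Tendsto (fun ε => hE ε t) (𝓝[>] (0 : ℝ)) (𝓝 ((Ioo a b).indicator fJ t)) := by
    intro t ht
    rcases eq_or_lt_of_le ht.2 with htb | htb
    · -- t = b
      have hzero : ∀ ε : ℝ, hE ε t = 0 := by
        intro ε
        have hnull : volume (Ioc (a + ε) b ∩ Ico t (t + ε)) = 0 := by
          refine measure_mono_null (fun y hy => ?_) (Real.volume_singleton (a := b))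
          have h1 : y ≤ b := hy.1.2
          have h2 : b ≤ y := htb ▸ hy.2.1
          exact le_antisymm h1 h2
        show (1 / ε) * ∫ y in Ioc (a + ε) b, (Ico t (t + ε)).indicator fJ y = 0
        rw [setIntegral_indicator measurableSet_Ico, setIntegral_measure_zero _ hnull, mul_zero]
      have hind : (Ioo a b).indicator fJ t = 0 :=
        indicator_of_notMem (by rw [htb]; exact fun h => lt_irrefl b h.2) _
      rw [hind]
      simp only [hzero]
      exact tendsto_const_nhds
    · -- t < b
      rw [indicator_of_mem (show t ∈ Ioo a b from ⟨ht.1, htb⟩)]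
      have hlimf : Tendsto fJ (𝓝[>] t) (𝓝 (fJ t)) :=
        (hfc.tendsto t).mono_left nhdsWithin_le_nhds
      have havg := avg_right (h := fJ) (c := t) (L := fJ t)
        (fun ε hε => hIfJ t (t + ε)) hlimf
      refine Tendsto.congr' ?_ havg
      filter_upwards [Ioo_mem_nhdsGT_of_mem
        ⟨le_refl (0:ℝ), lt_min (sub_pos.2 ht.1) (sub_pos.2 htb)⟩] with ε hε
      have hε0 : (0 : ℝ) < ε := hε.1
      have h1 : ε < t - a := lt_of_lt_of_le hε.2 (min_le_left _ _)
      have h2 : ε < b - t := lt_of_lt_of_le hε.2 (min_le_right _ _)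
      have hseteq : Ioc (a + ε) b ∩ Ico t (t + ε) = Ico t (t + ε) := by
        refine inter_eq_self_of_subset_right fun y hy => ?_
        exact ⟨lt_of_lt_of_le (by linarith) hy.1, by linarith [hy.2]⟩
      show (1 / ε) * ∫ y in Ioc t (t + ε), fJ y
          = (1 / ε) * ∫ y in Ioc (a + ε) b, (Ico t (t + ε)).indicator fJ y
      rw [setIntegral_indicator measurableSet_Ico, hseteq,
        integral_Ico_eq_integral_Ioo, ← integral_Ioc_eq_integral_Ioo]
  -- Step 5 : dominate convergence gives the main limit
  have T1 : Tendsto (fun ε => ∫ t, hE ε t ∂ν) (𝓝[>] (0 : ℝ))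
      (𝓝 (∫ t, (Ioo a b).indicator fJ t ∂ν)) := by
    refine tendsto_integral_filter_of_dominated_convergence (fun _ => M) ?_ ?_ ?_ ?_
    · filter_upwards [self_mem_nhdsWithin] with ε hε
      exact hEmeas ε hε
    · filter_upwards [self_mem_nhdsWithin] with ε hε
      exact Eventually.of_forall fun t => by
        simpa [Real.norm_eq_abs] using hEbd ε hε t
    · exact integrable_const M
    · filter_upwards [ae_restrict_mem measurableSet_Ioc] with t ht
      exact hElim t ht
  have hT1val : ∫ t, (Ioo a b).indicator fJ t ∂ν = ∫ t in Ioo a b, fJ t ∂G.measure := by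
    rw [integral_indicator measurableSet_Ioo, hν, Measure.restrict_restrict measurableSet_Ioo,
      inter_eq_self_of_subset_left Ioo_subset_Ioc_self]
  rw [hT1val] at T1
  -- Step 6 : boundary limits
  have T2 : Tendsto (fun ε : ℝ => (1 / ε) * ∫ y in Ioc (b - ε) b, G y) (𝓝[>] (0 : ℝ))
      (𝓝 (Function.leftLim G b)) := by
    refine avg_left (fun ε hε => ?_) (G.mono.tendsto_leftLim b)
    exact bdd_integrableOn hGm.aestronglyMeasurable.restrict measurableSet_Ioc
      (by simp [Real.volume_Ioc]) (hGbd (b - ε) b)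
  have T3 : Tendsto (fun ε : ℝ => (1 / ε) * ∫ y in Ioc a (a + ε), G y * fJ y) (𝓝[>] (0 : ℝ))
      (𝓝 (G a * fJ a)) := by
    refine avg_right (fun ε hε => hIG fJ hfm hM a (a + ε)) ?_
    have hGtend : Tendsto G (𝓝[>] a) (𝓝 (G a)) :=
      (G.right_continuous a).tendsto.mono_left (nhdsWithin_mono a Ioi_subset_Ici_self)
    exact hGtend.mul ((hfc.tendsto a).mono_left nhdsWithin_le_nhds)
  -- Step 7 : combine
  have Tcomb : Tendsto (fun ε : ℝ => -(∫ t, hE ε t ∂ν)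
        + fJ b * ((1 / ε) * ∫ y in Ioc (b - ε) b, G y)
        - (1 / ε) * ∫ y in Ioc a (a + ε), G y * fJ y) (𝓝[>] (0 : ℝ))
      (𝓝 (-(∫ t in Ioo a b, fJ t ∂G.measure) + fJ b * Function.leftLim G b
        - G a * fJ a)) :=
    (T1.neg.add (T2.const_mul (fJ b))).sub T3
  have hval : -(∫ t in Ioo a b, fJ t ∂G.measure) + fJ b * Function.leftLim G b - G a * fJ a
      = G b * fJ b - G a * fJ a - ∫ x in Ioc a b, fJ x ∂G.measure := by
    have hm : (G.measure {b}).toReal = G b - Function.leftLim G b := by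
      rw [G.measure_singleton, ENNReal.toReal_ofReal
        (sub_nonneg.2 (G.mono.leftLim_le (le_refl b)))]
    have hsplit : ∫ x in Ioc a b, fJ x ∂G.measure
        = (∫ t in Ioo a b, fJ t ∂G.measure) + (G.measure {b}).toReal * fJ b := by
      have hu : Ioo a b ∪ {b} = Ioc a b := by
        rw [← Ioo_union_Icc_eq_Ioc hab (le_refl b), Icc_self]
      have hdisj : Disjoint (Ioo a b) ({b} : Set ℝ) :=
        disjoint_singleton_right.2 (fun h => lt_irrefl b h.2)
      have hint1 : IntegrableOn fJ (Ioo a b) G.measure := by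
        refine bdd_integrableOn hfc.aestronglyMeasurable.restrict measurableSet_Ioo
          ?_ (fun x _ => hM x)
        exact lt_of_le_of_lt (measure_mono Ioo_subset_Ioc_self)
          (by rw [G.measure_Ioc]; exact ENNReal.ofReal_lt_top)
      have hint2 : IntegrableOn fJ ({b} : Set ℝ) G.measure := by
        refine bdd_integrableOn hfc.aestronglyMeasurable.restrict
          (measurableSet_singleton b) ?_ (fun x _ => hM x)
        exact lt_of_le_of_lt (measure_mono (singleton_subset_iff.2 (show b ∈ Ioc a b from ⟨hab, le_refl b⟩)))
          (by rw [G.measure_Ioc]; exact ENNReal.ofReal_lt_top)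
      rw [← hu, setIntegral_union hdisj (measurableSet_singleton b) hint1 hint2,
        integral_singleton, measureReal_def, smul_eq_mul, mul_comm]
    rw [hsplit, hm]
    ring
  rw [hval] at Tcomb
  refine Tendsto.congr' ?_ Tcomb
  filter_upwards [Ioo_mem_nhdsGT_of_mem ⟨le_refl (0:ℝ), sub_pos.2 hab⟩] with ε hε
  exact (Ieq ε hε).symm

/-- Let `a < b`, let `g : [a,b] → ℝ` be a càdlàg function of bounded variation
(encoded as the difference `G₁ - G₂` of two Stieltjes functions on `[a,b]`, so that its
Lebesgue–Stieltjes measure is `dg = dG₁ - dG₂`) and let `f : [a,b] → ℝ` be continuous.  Then the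
deterministic forward integral over the half-open interval `∫_{]a,b]} g(x) d⁻f(x)` (defined with
the extension `f_J` of `f` which is `f(b)` to the right of `b` and `f(a)` to the left of `a`)
exists and equals `g(b) f(b) − g(a) f(a) − ∫_{]a,b]} f(x) dg(x)`. -/
theorem forward_integral_half_open_interval_by_parts
    (a b : ℝ) (hab : a < b)
    -- `g` càdlàg of bounded variation on `[a,b]`
    (G₁ G₂ : StieltjesFunction ℝ)
    (g : ℝ → ℝ)
    (hg : ∀ x ∈ Set.Icc a b, g x = G₁ x - G₂ x)
    -- `f` continuous on `[a,b]`
    (f : ℝ → ℝ)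
    (hf : ContinuousOn f (Set.Icc a b))
    -- the extension `f_J` of `f` to the real line
    (fJ : ℝ → ℝ)
    (hfJ : ∀ x, fJ x = if x < a then f a else if b < x then f b else f x) :
    Tendsto
      (fun ε : ℝ => ∫ x in Set.Ioc a b, g x * ((fJ (x + ε) - fJ x) / ε))
      (𝓝[>] 0)
      (𝓝 (g b * f b - g a * f a -
          ((∫ x in Set.Ioc a b, f x ∂G₁.measure) - ∫ x in Set.Ioc a b, f x ∂G₂.measure))) := by
  have hable : a ≤ b := hab.le
  -- `fJ` agrees with `f` on `[a, b]`
  have hfJeq : ∀ x ∈ Icc a b, fJ x = f x := by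
    intro x hx
    rw [hfJ x, if_neg (not_lt.2 hx.1), if_neg (not_lt.2 hx.2)]
  -- `fJ` is continuous
  have hfJ_proj : fJ = fun x => f (Set.projIcc a b hable x) := by
    funext x
    rw [hfJ x]
    rcases lt_or_ge x a with h | h
    · rw [if_pos h, Set.projIcc_of_le_left _ h.le]
    · rcases le_or_gt x b with h2 | h2
      · rw [if_neg (not_lt.2 h), if_neg (not_lt.2 h2), Set.projIcc_of_mem _ ⟨h, h2⟩]
      · rw [if_neg (not_lt.2 h), if_pos h2, Set.projIcc_of_right_le _ h2.le]
  have hcont : Continuous fJ := by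
    rw [hfJ_proj]
    exact hf.comp_continuous (continuous_subtype_val.comp continuous_projIcc)
      (fun x => (Set.projIcc a b hable x).2)
  -- a bound for `fJ`
  obtain ⟨M, hM⟩ : ∃ M, ∀ y ∈ Icc a b, ‖f y‖ ≤ M :=
    isCompact_Icc.exists_bound_of_continuousOn hf
  have hMabs : ∀ x, |fJ x| ≤ M := by
    intro x
    rw [hfJ_proj]
    simpa [Real.norm_eq_abs] using hM _ (Set.projIcc a b hable x).2
  -- `fJ` is constant to the right of `b`
  have hconst : ∀ x, b ≤ x → fJ x = fJ b := by
    intro x hx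
    rw [hfJ x, hfJeq b ⟨hable, le_refl b⟩, if_neg (not_lt.2 (hable.trans hx))]
    rcases eq_or_lt_of_le hx with h | h
    · simp [← h]
    · rw [if_pos h]
  have hfb : fJ b = f b := hfJeq b ⟨hable, le_refl b⟩
  have hfa : fJ a = f a := hfJeq a ⟨le_refl a, hable⟩
  -- apply the key lemma to `G₁` and `G₂`
  have K1 := key a b hab G₁ fJ hcont hMabs hconst
  have K2 := key a b hab G₂ fJ hcont hMabs hconst
  have Ksub := K1.sub K2
  -- identify the limit value
  have hval : (G₁ b * fJ b - G₁ a * fJ a - ∫ x in Ioc a b, fJ x ∂G₁.measure)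
      - (G₂ b * fJ b - G₂ a * fJ a - ∫ x in Ioc a b, fJ x ∂G₂.measure)
      = g b * f b - g a * f a -
        ((∫ x in Set.Ioc a b, f x ∂G₁.measure) - ∫ x in Set.Ioc a b, f x ∂G₂.measure) := by
    have e1 : ∫ x in Ioc a b, fJ x ∂G₁.measure = ∫ x in Ioc a b, f x ∂G₁.measure :=
      setIntegral_congr_fun measurableSet_Ioc fun x hx => hfJeq x ⟨hx.1.le, hx.2⟩
    have e2 : ∫ x in Ioc a b, fJ x ∂G₂.measure = ∫ x in Ioc a b, f x ∂G₂.measure :=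
      setIntegral_congr_fun measurableSet_Ioc fun x hx => hfJeq x ⟨hx.1.le, hx.2⟩
    rw [e1, e2, hfa, hfb, hg b ⟨hable, le_refl b⟩, hg a ⟨le_refl a, hable⟩]
    ring
  rw [hval] at Ksub
  refine Tendsto.congr' ?_ Ksub
  filter_upwards [self_mem_nhdsWithin] with ε (hε : (0:ℝ) < ε)
  -- for fixed `ε > 0` the integrand splits
  have hq : Measurable fun x => (fJ (x + ε) - fJ x) / ε :=
    ((hcont.measurable.comp (measurable_id.add_const ε)).sub hcont.measurable).div_const ε
  have hqbd : ∀ x, |(fJ (x + ε) - fJ x) / ε| ≤ (M + M) / ε := by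
    intro x
    rw [abs_div, abs_of_pos hε]
    have hnum : |fJ (x + ε) - fJ x| ≤ M + M :=
      (abs_sub _ _).trans (add_le_add (hMabs _) (hMabs _))
    exact div_le_div_of_nonneg_right hnum hε.le
  have hintG : ∀ (G : StieltjesFunction ℝ),
      IntegrableOn (fun x => G x * ((fJ (x + ε) - fJ x) / ε)) (Ioc a b) := by
    intro G
    refine bdd_integrableOn ((G.mono.measurable.mul hq).aestronglyMeasurable)
      measurableSet_Ioc (by simp [Real.volume_Ioc])
      (C := max |G a| |G b| * ((M + M) / ε)) ?_
    intro x hx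
    rw [abs_mul]
    refine mul_le_mul ?_ (hqbd x) (abs_nonneg _) (le_trans (abs_nonneg _) (le_max_left _ _))
    refine abs_le.2 ⟨?_, ?_⟩
    · calc -(max |G a| |G b|) ≤ -|G a| := neg_le_neg (le_max_left _ _)
        _ ≤ G a := neg_abs_le _
        _ ≤ G x := G.mono hx.1.le
    · calc G x ≤ G b := G.mono hx.2
        _ ≤ |G b| := le_abs_self _
        _ ≤ max |G a| |G b| := le_max_right _ _
  calc (fun ε : ℝ => (∫ x in Ioc a b, G₁ x * ((fJ (x + ε) - fJ x) / ε))
          - ∫ x in Ioc a b, G₂ x * ((fJ (x + ε) - fJ x) / ε)) ε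
      = ∫ x in Ioc a b, (G₁ x * ((fJ (x + ε) - fJ x) / ε)
          - G₂ x * ((fJ (x + ε) - fJ x) / ε)) := (integral_sub (hintG G₁) (hintG G₂)).symm
    _ = ∫ x in Set.Ioc a b, g x * ((fJ (x + ε) - fJ x) / ε) := by
        refine setIntegral_congr_fun measurableSet_Ioc fun x hx => ?_
        rw [hg x ⟨hx.1.le, hx.2⟩]
        ring
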